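/- Let ζ ∈ L²(0,1) be real-valued. Suppose there exists a strictly increasing sequence of positive integers (ℓ_k) with ∑ 1/ℓ_k = ∞ such that for each k, ∫₀¹ x ζ(x) (1 - x^{2ℓ_k+1}) dx = 0 and ∫₀¹ ζ(x) x^{2ℓ_k+2} dx = 0. Then ζ = 0 almost everywhere in (0,1). -/

import Mathlib

open MeasureTheory Set

section MuntzAuxSection
open Polynomial Filter

namespace Stmt0Aux

/-- The Müntz peeling operator: per monomial `X^a ↦ ((l-m)/(l-a)) (X^a - X^l)`. -/
noncomputable def T (m l : ℕ) (p : ℝ[X]) : ℝ[X] :=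
  p.sum fun a c => Polynomial.C (c * (((l : ℝ) - m) / ((l : ℝ) - a))) * (X ^ a - X ^ l)

lemma coeff_T (m l : ℕ) (p : ℝ[X]) (i : ℕ) :
    (T m l p).coeff i = ∑ a ∈ p.support,
      (p.coeff a * (((l : ℝ) - m) / ((l : ℝ) - a))) *
        ((if i = a then (1:ℝ) else 0) - (if i = l then 1 else 0)) := by
  rw [T, Polynomial.sum, Polynomial.finset_sum_coeff]
  refine Finset.sum_congr rfl fun a _ => ?_
  rw [coeff_C_mul, coeff_sub, coeff_X_pow, coeff_X_pow]

lemma eval_T (m l : ℕ) (p : ℝ[X]) (x : ℝ) :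
    (T m l p).eval x = ∑ a ∈ p.support,
      (p.coeff a * (((l : ℝ) - m) / ((l : ℝ) - a))) * (x ^ a - x ^ l) := by
  simp [T, Polynomial.sum, eval_finset_sum]

lemma support_T (m l : ℕ) (p : ℝ[X]) {i : ℕ} (hi : i ∈ (T m l p).support) :
    i ∈ p.support ∨ i = l := by
  by_contra h
  push_neg at h
  obtain ⟨h1, h2⟩ := h
  apply Polynomial.mem_support_iff.mp hi
  rw [coeff_T]
  refine Finset.sum_eq_zero fun a ha => ?_
  have : i ≠ a := fun e => h1 (e ▸ ha)
  simp [this, h2]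

lemma coeff_T_m (m l : ℕ) (hml : m < l) (p : ℝ[X]) :
    (T m l p).coeff m = p.coeff m := by
  rw [coeff_T]
  have hlm : m ≠ l := hml.ne
  have hcast : ((l : ℝ) - m) ≠ 0 := by
    have : (m : ℝ) < l := by exact_mod_cast hml
    linarith
  by_cases hmem : m ∈ p.support
  · rw [Finset.sum_eq_single_of_mem m hmem]
    · simp [hlm, div_self hcast]
    · intro a ha hne
      simp [Ne.symm hne, hlm]
  · rw [Polynomial.notMem_support_iff.mp hmem]
    refine Finset.sum_eq_zero fun a ha => ?_
    have : m ≠ a := fun e => hmem (e ▸ ha)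
    simp [this, hlm]

lemma coeff_T_zero (m l : ℕ) (hl : 1 ≤ l) (p : ℝ[X]) (h0 : p.coeff 0 = 0) :
    (T m l p).coeff 0 = 0 := by
  rw [coeff_T]
  have hl0 : (0:ℕ) ≠ l := by omega
  refine Finset.sum_eq_zero fun a ha => ?_
  have : (0:ℕ) ≠ a := fun e => Polynomial.mem_support_iff.mp ha (e ▸ h0)
  simp [this, hl0]

end Stmt0Aux


namespace Stmt0Aux

-- integrability of zpow on [x,1], x>0
lemma intint (n : ℤ) {x : ℝ} (hx : 0 < x) (hx1 : x ≤ 1) :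
    IntervalIntegrable (fun t : ℝ => t ^ n) volume x 1 := by
  refine ContinuousOn.intervalIntegrable ?_
  have hsub : Set.uIcc x 1 ⊆ {t : ℝ | t ≠ 0} := by
    intro t ht
    rw [Set.uIcc_of_le hx1] at ht
    exact ne_of_gt (lt_of_lt_of_le hx ht.1)
  exact fun t ht => ((continuousAt_zpow₀ t n (Or.inl (hsub ht))).continuousWithinAt)

-- ∫_x^1 t^(a - l - 1) = (1 - x^(a-l))/(a - l), for a < l, 0 < x ≤ 1
lemma int_mono (a l : ℕ) (hal : a < l) {x : ℝ} (hx : 0 < x) (hx1 : x ≤ 1) :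
    ∫ t in x..1, t ^ ((a : ℤ) - l - 1) = (1 - x ^ ((a : ℤ) - l)) / ((a : ℝ) - l) := by
  have h0 : (0:ℝ) ∉ Set.uIcc x 1 := by
    rw [Set.uIcc_of_le hx1]
    intro h; exact absurd h.1 (not_le.mpr hx)
  have hne : (a : ℤ) - l - 1 ≠ -1 := by omega
  rw [integral_zpow (Or.inr ⟨hne, h0⟩)]
  have : (a : ℤ) - l - 1 + 1 = (a : ℤ) - l := by ring
  rw [this]
  rw [one_zpow]
  push_cast
  ring_nf

end Stmt0Aux

namespace Stmt0Aux

lemma integrand_eq (l : ℕ) (p : ℝ[X]) {t : ℝ} (ht : 0 < t) :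
    p.eval t * t ^ (-(l:ℤ) - 1) = ∑ a ∈ p.support, p.coeff a * t ^ ((a : ℤ) - l - 1) := by
  rw [Polynomial.eval_eq_sum, Polynomial.sum, Finset.sum_mul]
  refine Finset.sum_congr rfl fun a _ => ?_
  rw [mul_assoc, ← zpow_natCast t a, ← zpow_add₀ (ne_of_gt ht)]
  have : (a:ℤ) + (-(l:ℤ) - 1) = (a:ℤ) - l - 1 := by ring
  rw [this]

lemma int_poly (l : ℕ) (p : ℝ[X]) (hdeg : ∀ a ∈ p.support, a < l)
    {x : ℝ} (hx : 0 < x) (hx1 : x ≤ 1) :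
    ∫ t in x..1, p.eval t * t ^ (-(l:ℤ) - 1)
      = ∑ a ∈ p.support, p.coeff a * ((1 - x ^ ((a : ℤ) - l)) / ((a : ℝ) - l)) := by
  have h1 : ∫ t in x..1, p.eval t * t ^ (-(l:ℤ) - 1)
      = ∫ t in x..1, ∑ a ∈ p.support, p.coeff a * t ^ ((a : ℤ) - l - 1) := by
    refine intervalIntegral.integral_congr fun t ht => ?_
    rw [Set.uIcc_of_le hx1] at ht
    exact integrand_eq l p (lt_of_lt_of_le hx ht.1)
  rw [h1, intervalIntegral.integral_finset_sum
    (fun (a:ℕ) _ => ((intint ((a:ℤ) - l - 1) hx hx1).const_mul (p.coeff a)))]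
  refine Finset.sum_congr rfl fun a ha => ?_
  rw [intervalIntegral.integral_const_mul, int_mono a l (hdeg a ha) hx hx1]

end Stmt0Aux

namespace Stmt0Aux

lemma T_eval_int (m l : ℕ) (p : ℝ[X]) (hdeg : ∀ a ∈ p.support, a < l)
    {x : ℝ} (hx : 0 < x) (hx1 : x ≤ 1) :
    (T m l p).eval x
      = (((l:ℝ) - m) * x ^ l) * ∫ t in x..1, p.eval t * t ^ (-(l:ℤ) - 1) := by
  rw [int_poly l p hdeg hx hx1, eval_T, Finset.mul_sum]
  refine Finset.sum_congr rfl fun a ha => ?_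
  have hal : a < l := hdeg a ha
  have hla : ((l:ℝ) - a) ≠ 0 := by
    have : (a : ℝ) < l := by exact_mod_cast hal
    linarith
  have hxl : x ^ l * x ^ ((a:ℤ) - l) = x ^ a := by
    rw [← zpow_natCast x l, ← zpow_add₀ (ne_of_gt hx), ← zpow_natCast x a]
    congr 1
    ring
  have hal' : ((a:ℝ) - l) ≠ 0 := fun h => hla (by linarith)
  have key : x ^ l * (1 - x ^ ((a:ℤ) - l)) = x ^ l - x ^ a := by
    rw [mul_sub, mul_one, hxl]
  have : (((l:ℝ) - m) * x ^ l) * (p.coeff a * ((1 - x ^ ((a:ℤ) - l)) / ((a:ℝ) - l)))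
      = p.coeff a * (((l:ℝ) - m) * ((x ^ l - x ^ a) / ((a:ℝ) - l))) := by
    rw [← key]; ring
  rw [this]
  field_simp
  ring

end Stmt0Aux

namespace Stmt0Aux

lemma T_bound (m l : ℕ) (hml : m < l) (p : ℝ[X]) (hdeg : ∀ a ∈ p.support, a < l)
    (h0 : p.coeff 0 = 0) {B : ℝ} (hB : ∀ t ∈ Icc (0:ℝ) 1, |p.eval t| ≤ B) :
    ∀ x ∈ Icc (0:ℝ) 1, |(T m l p).eval x| ≤ (1 - (m:ℝ)/l) * B := by
  have hl1 : 1 ≤ l := by omega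
  have hl0 : (0:ℝ) < l := by exact_mod_cast Nat.lt_of_lt_of_le Nat.zero_lt_one hl1
  have hmlR : (m:ℝ) < l := by exact_mod_cast hml
  have hBnn : 0 ≤ B := by
    have := hB 0 ⟨le_refl 0, zero_le_one⟩
    rwa [← Polynomial.coeff_zero_eq_eval_zero, h0, abs_zero] at this
  have hfac : 0 ≤ 1 - (m:ℝ)/l := by
    have : (m:ℝ)/l ≤ 1 := (div_le_one hl0).mpr hmlR.le
    linarith
  intro x hx
  rcases eq_or_lt_of_le hx.1 with hx0 | hxpos
  · rw [← hx0, ← Polynomial.coeff_zero_eq_eval_zero, coeff_T_zero m l hl1 p h0, abs_zero]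
    exact mul_nonneg hfac hBnn
  have hx1 : x ≤ 1 := hx.2
  have hnn : 0 ≤ ((l:ℝ) - m) * x ^ l :=
    mul_nonneg (by linarith) (pow_nonneg hxpos.le l)
  -- value of ∫ t^(-(l)-1)
  have hval : ∫ t in x..1, t ^ (-(l:ℤ) - 1) = (x ^ (-(l:ℤ)) - 1) / l := by
    have h := int_mono 0 l (by omega) hxpos hx1
    have e1 : ((0:ℕ) : ℤ) - l - 1 = -(l:ℤ) - 1 := by simp
    have e2 : ((0:ℕ) : ℤ) - l = -(l:ℤ) := by simp
    rw [e1, e2] at h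
    rw [h]
    have : ((0:ℕ) : ℝ) - l = -(l:ℝ) := by simp
    rw [this]
    rw [div_eq_div_iff (by linarith) (ne_of_gt hl0)]
    ring
  -- integrability
  have hcont : ContinuousOn (fun t : ℝ => p.eval t * t ^ (-(l:ℤ) - 1)) (Set.uIcc x 1) := by
    refine (p.continuous_aeval).continuousOn.mul ?_
    intro t ht
    rw [Set.uIcc_of_le hx1] at ht
    exact ((continuousAt_zpow₀ t _ (Or.inl (ne_of_gt (lt_of_lt_of_le hxpos ht.1)))).continuousWithinAt)
  have hI1 : IntervalIntegrable (fun t : ℝ => |p.eval t * t ^ (-(l:ℤ) - 1)|) volume x 1 :=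
    (hcont.abs).intervalIntegrable
  have hI2 : IntervalIntegrable (fun t : ℝ => B * t ^ (-(l:ℤ) - 1)) volume x 1 :=
    (intint (-(l:ℤ) - 1) hxpos hx1).const_mul B
  have hmono : ∀ t ∈ Icc x 1, |p.eval t * t ^ (-(l:ℤ) - 1)| ≤ B * t ^ (-(l:ℤ) - 1) := by
    intro t ht
    have htpos : 0 < t := lt_of_lt_of_le hxpos ht.1
    have hz : (0:ℝ) < t ^ (-(l:ℤ) - 1) := zpow_pos htpos _
    rw [abs_mul, abs_of_pos hz]
    exact mul_le_mul_of_nonneg_right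
      (hB t ⟨htpos.le, ht.2⟩) hz.le
  have hint_le : |∫ t in x..1, p.eval t * t ^ (-(l:ℤ) - 1)|
      ≤ B * ((x ^ (-(l:ℤ)) - 1) / l) := by
    calc |∫ t in x..1, p.eval t * t ^ (-(l:ℤ) - 1)|
        ≤ ∫ t in x..1, |p.eval t * t ^ (-(l:ℤ) - 1)| :=
          intervalIntegral.abs_integral_le_integral_abs hx1
      _ ≤ ∫ t in x..1, B * t ^ (-(l:ℤ) - 1) :=
          intervalIntegral.integral_mono_on hx1 hI1 hI2 hmono
      _ = B * ((x ^ (-(l:ℤ)) - 1) / l) := by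
          rw [intervalIntegral.integral_const_mul, hval]
  have hxinv : x ^ l * x ^ (-(l:ℤ)) = 1 := by
    rw [← zpow_natCast x l, ← zpow_add₀ (ne_of_gt hxpos)]
    simp
  have hxle : x ^ l ≤ 1 := pow_le_one₀ hxpos.le hx1
  have hxnn : 0 ≤ x ^ l := pow_nonneg hxpos.le l
  rw [T_eval_int m l p hdeg hxpos hx1, abs_mul, abs_of_nonneg hnn]
  calc (((l:ℝ) - m) * x ^ l) * |∫ t in x..1, p.eval t * t ^ (-(l:ℤ) - 1)|
      ≤ (((l:ℝ) - m) * x ^ l) * (B * ((x ^ (-(l:ℤ)) - 1) / l)) :=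
        mul_le_mul_of_nonneg_left hint_le hnn
    _ = (1 - (m:ℝ)/l) * B * (1 - x ^ l) := by
        have : x ^ l * (x ^ (-(l:ℤ)) - 1) = 1 - x ^ l := by
          rw [mul_sub, hxinv, mul_one]
        field_simp
        linear_combination ((l:ℝ) - m) * B * this
    _ ≤ (1 - (m:ℝ)/l) * B := by
        nlinarith [mul_nonneg hfac hBnn, mul_nonneg (mul_nonneg hfac hBnn) hxnn]

end Stmt0Aux

namespace Stmt0Aux

noncomputable def P (m : ℕ) (l : ℕ → ℕ) : ℕ → ℝ[X]
  | 0 => X ^ m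
  | (n+1) => T m (l n) (P m l n)

lemma P_inv (m : ℕ) (hm : 1 ≤ m) (l : ℕ → ℕ) (hl : ∀ j, m < l j) (hmono : StrictMono l)
    (n : ℕ) :
    (∀ a ∈ (P m l n).support, a = m ∨ ∃ j, j < n ∧ a = l j) ∧
    (P m l n).coeff m = 1 ∧ (P m l n).coeff 0 = 0 ∧
    ∀ x ∈ Icc (0:ℝ) 1, |(P m l n).eval x| ≤ ∏ j ∈ Finset.range n, (1 - (m:ℝ)/(l j)) := by
  induction n with
  | zero =>
    refine ⟨?_, ?_, ?_, ?_⟩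
    · intro a ha
      left
      have ha' : a ∈ (X ^ m : ℝ[X]).support := by simpa [P] using ha
      rw [Polynomial.support_X_pow (R := ℝ) m] at ha'
      simpa using ha'
    · simp [P]
    · have : ¬ (0 = m) := by omega
      simp [P, Polynomial.coeff_X_pow, this]
    · intro x hx
      simp only [P, Polynomial.eval_pow, Polynomial.eval_X, Finset.range_zero,
        Finset.prod_empty]
      rw [abs_pow]
      exact pow_le_one₀ (abs_nonneg x) (by rw [abs_of_nonneg hx.1]; exact hx.2)
  | succ n ih =>
    obtain ⟨hsupp, hcm, hc0, hbd⟩ := ih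
    have hdeg : ∀ a ∈ (P m l n).support, a < l n := by
      intro a ha
      rcases hsupp a ha with rfl | ⟨j, hj, rfl⟩
      · exact hl n
      · exact hmono hj
    have hml : m < l n := hl n
    refine ⟨?_, ?_, ?_, ?_⟩
    · intro a ha
      rcases support_T m (l n) (P m l n) ha with h | rfl
      · rcases hsupp a h with h' | ⟨j, hj, rfl⟩
        · exact Or.inl h'
        · exact Or.inr ⟨j, by omega, rfl⟩
      · exact Or.inr ⟨n, by omega, rfl⟩
    · rw [show P m l (n+1) = T m (l n) (P m l n) from rfl, coeff_T_m m (l n) hml, hcm]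
    · exact coeff_T_zero m (l n) (by omega) _ hc0
    · intro x hx
      rw [Finset.prod_range_succ, mul_comm]
      exact T_bound m (l n) hml (P m l n) hdeg hc0 hbd x hx

end Stmt0Aux

namespace Stmt0Aux

lemma integrable_mul_bdd (g : ℝ → ℝ) (hg : IntegrableOn g (Ioo 0 1))
    {h : ℝ → ℝ} (hmeas : AEStronglyMeasurable h (volume.restrict (Ioo (0:ℝ) 1)))
    {C : ℝ} (hC : ∀ x ∈ Ioo (0:ℝ) 1, |h x| ≤ C) :
    IntegrableOn (fun x => g x * h x) (Ioo (0:ℝ) 1) := by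
  refine Integrable.mono' (hg.norm.const_mul C) (hg.aestronglyMeasurable.mul hmeas) ?_
  filter_upwards [ae_restrict_mem measurableSet_Ioo] with x hx
  rw [norm_mul]
  calc ‖g x‖ * ‖h x‖ ≤ ‖g x‖ * C :=
        mul_le_mul_of_nonneg_left (hC x hx) (norm_nonneg _)
    _ = C * ‖g x‖ := mul_comm _ _

lemma integrable_mul_pow (g : ℝ → ℝ) (hg : IntegrableOn g (Ioo 0 1)) (a : ℕ) :
    IntegrableOn (fun x => g x * x ^ a) (Ioo (0:ℝ) 1) := by
  refine integrable_mul_bdd g hg (Continuous.aestronglyMeasurable (by continuity)) (C := 1) ?_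
  intro x hx
  rw [abs_pow]
  exact pow_le_one₀ (abs_nonneg x) (by rw [abs_of_nonneg hx.1.le]; exact hx.2.le)

lemma integral_mul_poly (g : ℝ → ℝ) (hg : IntegrableOn g (Ioo 0 1)) (p : ℝ[X]) :
    ∫ x in Ioo (0:ℝ) 1, g x * p.eval x
      = ∑ a ∈ p.support, p.coeff a * ∫ x in Ioo (0:ℝ) 1, g x * x ^ a := by
  have h1 : ∀ x : ℝ, g x * p.eval x = ∑ a ∈ p.support, p.coeff a * (g x * x ^ a) := by
    intro x
    rw [Polynomial.eval_eq_sum, Polynomial.sum, Finset.mul_sum]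
    exact Finset.sum_congr rfl fun a _ => by ring
  simp_rw [h1]
  rw [integral_finset_sum _ (fun a _ => ((integrable_mul_pow g hg a).const_mul _))]
  exact Finset.sum_congr rfl fun a _ => by rw [MeasureTheory.integral_const_mul]

/-- Core Müntz-type lemma. -/
lemma core (g : ℝ → ℝ) (hg : IntegrableOn g (Ioo 0 1)) (Λ : ℕ → ℕ) (hmono : StrictMono Λ)
    (hdiv : ¬ Summable (fun k => (1:ℝ) / (Λ k : ℝ)))
    (hvan : ∀ k, ∫ x in Ioo (0:ℝ) 1, g x * x ^ (Λ k) = 0)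
    (m : ℕ) (hm : 1 ≤ m) : ∫ x in Ioo (0:ℝ) 1, g x * x ^ m = 0 := by
  set K := m + 1 with hK
  set l : ℕ → ℕ := fun j => Λ (j + K) with hldef
  have hl : ∀ j, m < l j := by
    intro j
    have h1 : K ≤ Λ K := hmono.le_apply
    have h2 : Λ K ≤ Λ (j + K) := hmono.monotone (by omega)
    have : l j = Λ (j + K) := rfl
    omega
  have hlmono : StrictMono l := fun i j hij => hmono (by omega)
  have hlpos : ∀ j, 0 < l j := fun j => lt_of_le_of_lt (Nat.zero_le m) (hl j)
  -- the product bound tends to 0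
  set Bn : ℕ → ℝ := fun n => ∏ j ∈ Finset.range n, (1 - (m:ℝ)/(l j)) with hBn
  have hfac : ∀ j, 0 ≤ 1 - (m:ℝ)/(l j) := by
    intro j
    have h0 : (0:ℝ) < l j := by exact_mod_cast hlpos j
    have : (m:ℝ)/(l j) ≤ 1 := (div_le_one h0).mpr (by exact_mod_cast (hl j).le)
    linarith
  have hBnn : ∀ n, 0 ≤ Bn n := fun n => Finset.prod_nonneg fun j _ => hfac j
  have hBexp : ∀ n, Bn n ≤ Real.exp (- ∑ j ∈ Finset.range n, (m:ℝ)/(l j)) := by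
    intro n
    rw [← Finset.sum_neg_distrib, Real.exp_sum]
    refine Finset.prod_le_prod (fun j _ => hfac j) (fun j _ => ?_)
    have := Real.add_one_le_exp (-((m:ℝ)/(l j)))
    linarith
  have hnotsum : ¬ Summable (fun j => (1:ℝ) / (l j : ℝ)) := by
    intro hs
    exact hdiv ((summable_nat_add_iff K).mp hs)
  have htend : Tendsto (fun n => ∑ j ∈ Finset.range n, (1:ℝ)/(l j)) atTop atTop :=
    (not_summable_iff_tendsto_nat_atTop_of_nonneg
      (fun j => by positivity)).mp hnotsum
  have hmR : (0:ℝ) < m := by exact_mod_cast hm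
  have htend2 : Tendsto (fun n => ∑ j ∈ Finset.range n, (m:ℝ)/(l j)) atTop atTop := by
    have : (fun n => ∑ j ∈ Finset.range n, (m:ℝ)/(l j))
        = (fun n => (m:ℝ) * ∑ j ∈ Finset.range n, (1:ℝ)/(l j)) := by
      funext n
      rw [Finset.mul_sum]
      exact Finset.sum_congr rfl fun j _ => by ring
    rw [this]
    exact htend.const_mul_atTop hmR
  have hBlim : Tendsto Bn atTop (nhds 0) := by
    refine squeeze_zero hBnn hBexp ?_
    have h1 : Tendsto (fun n => -∑ j ∈ Finset.range n, (m:ℝ)/(l j)) atTop atBot :=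
      tendsto_neg_atBot_iff.mpr htend2
    exact Real.tendsto_exp_atBot.comp h1
  -- the moments of P n
  have hPhi : ∀ n, ∫ x in Ioo (0:ℝ) 1, g x * (P m l n).eval x
      = ∫ x in Ioo (0:ℝ) 1, g x * x ^ m := by
    intro n
    obtain ⟨hsupp, hcm, hc0, hbd⟩ := P_inv m hm l hl hlmono n
    rw [integral_mul_poly g hg]
    have hmem : m ∈ (P m l n).support := Polynomial.mem_support_iff.mpr (by rw [hcm]; norm_num)
    rw [Finset.sum_eq_single_of_mem m hmem]
    · rw [hcm, one_mul]
    · intro a ha hne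
      rcases hsupp a ha with rfl | ⟨j, hj, rfl⟩
      · exact absurd rfl hne
      · rw [hvan (j + K), mul_zero]
  -- the bound
  set C := ∫ x in Ioo (0:ℝ) 1, |g x| with hC
  have hCnn : 0 ≤ C := integral_nonneg fun x => abs_nonneg _
  have hkey : ∀ n, |∫ x in Ioo (0:ℝ) 1, g x * x ^ m| ≤ C * Bn n := by
    intro n
    obtain ⟨hsupp, hcm, hc0, hbd⟩ := P_inv m hm l hl hlmono n
    rw [← hPhi n]
    have hint : IntegrableOn (fun x => g x * (P m l n).eval x) (Ioo (0:ℝ) 1) :=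
      integrable_mul_bdd g hg
        (Continuous.aestronglyMeasurable (P m l n).continuous_aeval)
        (C := Bn n) (fun x hx => hbd x ⟨hx.1.le, hx.2.le⟩)
    calc |∫ x in Ioo (0:ℝ) 1, g x * (P m l n).eval x|
        ≤ ∫ x in Ioo (0:ℝ) 1, |g x| * |(P m l n).eval x| := by
          simpa [Real.norm_eq_abs, abs_mul] using
            MeasureTheory.norm_integral_le_integral_norm (μ := volume.restrict (Ioo 0 1))
              (fun x => g x * (P m l n).eval x)
      _ ≤ ∫ x in Ioo (0:ℝ) 1, |g x| * Bn n := by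
          have hia : IntegrableOn (fun x => |g x| * |(P m l n).eval x|) (Ioo (0:ℝ) 1) := by
            have h := hint.abs
            simpa [abs_mul, IntegrableOn] using h
          refine integral_mono_ae hia (hg.norm.mul_const _) ?_
          filter_upwards [ae_restrict_mem measurableSet_Ioo] with x hx
          exact mul_le_mul_of_nonneg_left (hbd x ⟨hx.1.le, hx.2.le⟩) (abs_nonneg _)
      _ = C * Bn n := by rw [MeasureTheory.integral_mul_const]
  have : Tendsto (fun n => C * Bn n) atTop (nhds 0) := by
    simpa using hBlim.const_mul C
  have habs : |∫ x in Ioo (0:ℝ) 1, g x * x ^ m| ≤ 0 :=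
    le_of_tendsto_of_tendsto' tendsto_const_nhds this hkey
  exact abs_eq_zero.mp (le_antisymm habs (abs_nonneg _))

end Stmt0Aux

end MuntzAuxSection

theorem stmt0 (ζ : ℝ → ℝ)
    (hζ : MemLp ζ 2 (volume.restrict (Ioo (0:ℝ) 1)))
    (ℓ : ℕ → ℕ) (hmono : StrictMono ℓ) (hpos : ∀ k, 0 < ℓ k)
    (hdiv : ¬ Summable (fun k => (1 : ℝ) / (ℓ k : ℝ)))
    (h1 : ∀ k, ∫ x in (0:ℝ)..1, x * ζ x * (1 - x ^ (2 * ℓ k + 1)) = 0)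
    (h2 : ∀ k, ∫ x in (0:ℝ)..1, ζ x * x ^ (2 * ℓ k + 2) = 0) :
    ζ =ᵐ[volume.restrict (Ioo (0:ℝ) 1)] 0 := by
  classical
  haveI hμfin : IsFiniteMeasure (volume.restrict (Ioo (0:ℝ) 1)) := by
    constructor
    rw [Measure.restrict_apply_univ, Real.volume_Ioo]
    exact ENNReal.ofReal_lt_top
  have hζint : IntegrableOn ζ (Ioo (0:ℝ) 1) :=
    memLp_one_iff_integrable.mp (hζ.mono_exponent one_le_two)
  have hvan : ∀ k, ∫ x in Ioo (0:ℝ) 1, ζ x * x ^ (2 * ℓ k + 2) = 0 := by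
    intro k
    have h := h2 k
    rwa [intervalIntegral.integral_of_le zero_le_one, integral_Ioc_eq_integral_Ioo] at h
  have hΛmono : StrictMono (fun k => 2 * ℓ k + 2) := by
    intro i j h
    have := hmono h
    show 2 * ℓ i + 2 < 2 * ℓ j + 2
    omega
  have hΛdiv : ¬ Summable (fun k => (1:ℝ) / ((2 * ℓ k + 2 : ℕ) : ℝ)) := by
    intro hs
    apply hdiv
    refine Summable.of_nonneg_of_le (fun k => by positivity) (fun k => ?_) (hs.mul_left 4)
    have hk1 : (1:ℝ) ≤ (ℓ k : ℝ) := by exact_mod_cast hpos k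
    have hc : ((2 * ℓ k + 2 : ℕ) : ℝ) = 2 * (ℓ k : ℝ) + 2 := by push_cast; ring
    rw [hc, mul_one_div, div_le_div_iff₀ (by linarith) (by linarith)]
    linarith
  have hmom : ∀ n : ℕ, 1 ≤ n → ∫ x in Ioo (0:ℝ) 1, ζ x * x ^ n = 0 :=
    Stmt0Aux.core ζ hζint _ hΛmono hΛdiv hvan
  -- moments of g(x) = x * ζ x all vanish
  set g : ℝ → ℝ := fun x => x * ζ x with hgdef
  have hgmom : ∀ n : ℕ, ∫ x in Ioo (0:ℝ) 1, g x * x ^ n = 0 := by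
    intro n
    have he : ∀ x : ℝ, g x * x ^ n = ζ x * x ^ (n+1) := fun x => by
      simp only [hgdef]; ring
    simp_rw [he]
    exact hmom (n+1) (by omega)
  have hgmeas : AEStronglyMeasurable g (volume.restrict (Ioo (0:ℝ) 1)) :=
    continuous_id.aestronglyMeasurable.mul hζ.aestronglyMeasurable
  have hg2 : MemLp g 2 (volume.restrict (Ioo (0:ℝ) 1)) := by
    refine MemLp.of_le hζ hgmeas ?_
    filter_upwards [ae_restrict_mem measurableSet_Ioo] with x hx
    rw [Real.norm_eq_abs, Real.norm_eq_abs, hgdef, abs_mul]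
    exact mul_le_of_le_one_left (abs_nonneg _) (by rw [abs_of_nonneg hx.1.le]; exact hx.2.le)
  have hgint : IntegrableOn g (Ioo (0:ℝ) 1) :=
    memLp_one_iff_integrable.mp (hg2.mono_exponent one_le_two)
  -- test against continuous functions
  have key : ∀ f : ℝ → ℝ, Continuous f → ∫ x in Ioo (0:ℝ) 1, g x * f x = 0 := by
    intro f hf
    set c := ∫ x in Ioo (0:ℝ) 1, |g x| with hc
    have hcnn : 0 ≤ c := integral_nonneg fun x => abs_nonneg _
    have hbound : ∀ ε : ℝ, 0 < ε → |∫ x in Ioo (0:ℝ) 1, g x * f x| ≤ ε * c := by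
      intro ε hε
      obtain ⟨p, hp⟩ := exists_polynomial_near_of_continuousOn 0 1 f hf.continuousOn ε hε
      obtain ⟨Cp, hCp⟩ := isCompact_Icc.exists_bound_of_continuousOn
        (Polynomial.continuous_aeval p).continuousOn (s := Icc (0:ℝ) 1)
      have hfp : IntegrableOn (fun x => g x * (f x - p.eval x)) (Ioo (0:ℝ) 1) :=
        Stmt0Aux.integrable_mul_bdd g hgint
          ((hf.sub (Polynomial.continuous_aeval p)).aestronglyMeasurable) (C := ε)
          (fun x hx => by
            rw [abs_sub_comm]
            exact (hp x ⟨hx.1.le, hx.2.le⟩).le)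
      have hpp : IntegrableOn (fun x => g x * p.eval x) (Ioo (0:ℝ) 1) :=
        Stmt0Aux.integrable_mul_bdd g hgint
          (Polynomial.continuous_aeval p).aestronglyMeasurable (C := Cp)
          (fun x hx => by
            simpa [Real.norm_eq_abs] using hCp x ⟨hx.1.le, hx.2.le⟩)
      have hgp : ∫ x in Ioo (0:ℝ) 1, g x * p.eval x = 0 := by
        rw [Stmt0Aux.integral_mul_poly g hgint p]
        exact Finset.sum_eq_zero fun a _ => by rw [hgmom a, mul_zero]
      have split : ∫ x in Ioo (0:ℝ) 1, g x * f x
          = ∫ x in Ioo (0:ℝ) 1, g x * (f x - p.eval x) := by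
        have he : ∀ x : ℝ, g x * f x = g x * (f x - p.eval x) + g x * p.eval x :=
          fun x => by ring
        simp_rw [he]
        rw [integral_add hfp hpp, hgp, add_zero]
      rw [split]
      calc |∫ x in Ioo (0:ℝ) 1, g x * (f x - p.eval x)|
          ≤ ∫ x in Ioo (0:ℝ) 1, |g x| * |f x - p.eval x| := by
            simpa [Real.norm_eq_abs, abs_mul] using
              MeasureTheory.norm_integral_le_integral_norm
                (μ := volume.restrict (Ioo 0 1)) (fun x => g x * (f x - p.eval x))
        _ ≤ ∫ x in Ioo (0:ℝ) 1, |g x| * ε := by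
            have hia : IntegrableOn (fun x => |g x| * |f x - p.eval x|) (Ioo (0:ℝ) 1) := by
              have h := hfp.abs
              simpa [abs_mul, IntegrableOn] using h
            refine integral_mono_ae hia (hgint.norm.mul_const _) ?_
            filter_upwards [ae_restrict_mem measurableSet_Ioo] with x hx
            refine mul_le_mul_of_nonneg_left ?_ (abs_nonneg _)
            rw [abs_sub_comm]
            exact (hp x ⟨hx.1.le, hx.2.le⟩).le
        _ = ε * c := by rw [MeasureTheory.integral_mul_const, mul_comm]
    have habs : |∫ x in Ioo (0:ℝ) 1, g x * f x| ≤ 0 := by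
      refine le_of_forall_pos_le_add ?_
      intro ε hε
      have hc1 : (0:ℝ) < c + 1 := by linarith
      have h := hbound (ε / (c+1)) (by positivity)
      have h2 : (ε/(c+1)) * c ≤ ε := by
        rw [div_mul_eq_mul_div, div_le_iff₀ hc1]
        nlinarith
      linarith
    exact abs_eq_zero.mp (le_antisymm habs (abs_nonneg _))
  -- L² density argument
  haveI : (volume.restrict (Ioo (0:ℝ) 1)).WeaklyRegular :=
    Measure.WeaklyRegular.restrict_of_measure_ne_top
      (by rw [Real.volume_Ioo]; exact ENNReal.ofReal_ne_top)
  haveI : Fact ((1:ENNReal) ≤ 2) := ⟨one_le_two⟩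
  set G : Lp ℝ 2 (volume.restrict (Ioo (0:ℝ) 1)) := hg2.toLp g with hGdef
  have hinner : ∀ f : BoundedContinuousFunction ℝ ℝ,
      (inner ℝ ((BoundedContinuousFunction.toLp (p := 2) (volume.restrict (Ioo (0:ℝ) 1)) ℝ) f) G : ℝ) = 0 := by
    intro f
    rw [MeasureTheory.L2.inner_def]
    have h1 : ∀ᵐ x ∂(volume.restrict (Ioo (0:ℝ) 1)),
        (inner ℝ ((((BoundedContinuousFunction.toLp (p := 2) (volume.restrict (Ioo (0:ℝ) 1)) ℝ) f) : Lp ℝ 2 (volume.restrict (Ioo (0:ℝ) 1))) x) (G x) : ℝ)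
          = g x * f x := by
      filter_upwards [BoundedContinuousFunction.coeFn_toLp (p := 2) (volume.restrict (Ioo (0:ℝ) 1)) ℝ f,
        hg2.coeFn_toLp] with x hx1 hx2
      rw [hx1, hx2, RCLike.inner_apply]
      simp [mul_comm]
    rw [integral_congr_ae h1]
    exact key f f.continuous
  have hzero : ∀ y : Lp ℝ 2 (volume.restrict (Ioo (0:ℝ) 1)), (inner ℝ y G : ℝ) = 0 := by
    intro y
    refine DenseRange.induction_on
      (BoundedContinuousFunction.toLp_denseRange ℝ (volume.restrict (Ioo (0:ℝ) 1)) (p := 2) ℝ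
        (by norm_num)) y ?_ hinner
    exact isClosed_eq (Continuous.inner continuous_id continuous_const) continuous_const
  have hG0 : G = 0 := inner_self_eq_zero.mp (hzero G)
  have hgae : g =ᵐ[volume.restrict (Ioo (0:ℝ) 1)] 0 := by
    have ha := hg2.coeFn_toLp
    have hb : (⇑G : ℝ → ℝ) =ᵐ[volume.restrict (Ioo (0:ℝ) 1)] 0 := by
      rw [hG0]
      exact Lp.coeFn_zero ℝ 2 _
    exact ha.symm.trans hb
  filter_upwards [hgae, ae_restrict_mem measurableSet_Ioo] with x hx hmem
  have hx0 : x ≠ 0 := ne_of_gt hmem.1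
  have : x * ζ x = 0 := hx
  simpa using (mul_eq_zero.mp this).resolve_left hx0
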